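/- A polynomial self-map σ of ℂ^n with σ(0) = 0 whose Jacobian matrix is I_n + N(z) with N(z) strictly block lower triangular (blocks as above) is a polynomial automorphism of ℂ^n whose inverse is also polynomial, and the Jacobian of σ^{-1} has the same form I_n + Ñ(ζ) with Ñ strictly block lower triangular. -/

import Mathlib

open MvPolynomial

lemma not_mem_vars_of_pderiv_eq_zero {n : ℕ} {p : MvPolynomial (Fin n) ℂ} {j : Fin n}
    (h : pderiv j p = 0) : j ∉ p.vars := by
  intro hj
  obtain ⟨d, hd, hdj⟩ := (mem_vars j).mp hj
  have hdj' : d j ≠ 0 := Finsupp.mem_support_iff.mp hdj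
  have hkey : coeff (d - Finsupp.single j 1) (pderiv j p) = coeff d p * (d j : ℂ) := by
    conv_lhs => rw [p.as_sum]
    rw [map_sum]
    simp only [pderiv_monomial]
    rw [coeff_sum]
    rw [Finset.sum_eq_single_of_mem d hd]
    · simp [coeff_monomial]
    · intro s hs hsd
      rw [coeff_monomial]
      split
      · rename_i heq
        by_cases hsj : s j = 0
        · simp [hsj]
        · exfalso
          apply hsd
          ext k
          by_cases hk : k = j
          · subst hk
            have := congrArg (fun f : (Fin n →₀ ℕ) => f k) heq
            simp only [Finsupp.tsub_apply, Finsupp.single_eq_same] at this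
            omega
          · have := congrArg (fun f : (Fin n →₀ ℕ) => f k) heq
            simpa [Finsupp.tsub_apply, Finsupp.single_eq_of_ne' (Ne.symm hk)] using this
      · rfl
  rw [h] at hkey
  have h1 : coeff d p ≠ 0 := mem_support_iff.mp hd
  have h2 : (d j : ℂ) ≠ 0 := Nat.cast_ne_zero.mpr hdj'
  simp only [coeff_zero] at hkey
  exact (mul_ne_zero h1 h2) hkey.symm

lemma my_eval_congr {n : ℕ} {f g : Fin n → ℂ} {p : MvPolynomial (Fin n) ℂ}
    (h : ∀ i ∈ p.vars, f i = g i) : eval f p = eval g p := by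
  apply hom_congr_vars
  · ext x
    simp
  · intro i hi _
    simpa using h i hi
  · rfl

lemma my_eval_bind₁ {n : ℕ} (f : Fin n → ℂ) (g : Fin n → MvPolynomial (Fin n) ℂ)
    (p : MvPolynomial (Fin n) ℂ) :
    eval f (bind₁ g p) = eval (fun j => eval f (g j)) p := by
  simpa using eval₂Hom_bind₁ (RingHom.id ℂ) f g p

noncomputable def jacQ (n l : ℕ) (b : Fin n → Fin l) (S : Fin n → MvPolynomial (Fin n) ℂ) :
    Fin n → MvPolynomial (Fin n) ℂ
  | i => X i - bind₁ (fun j => if _ : (b j : ℕ) < (b i : ℕ) then jacQ n l b S j else 0) (S i)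
  termination_by i => (b i : ℕ)

theorem unipotent_jacobian_polynomial_automorphism (n l : ℕ) (b : Fin n → Fin l)
    (hb : Monotone b)
    (P : Fin n → MvPolynomial (Fin n) ℂ)
    (hP0 : ∀ i, constantCoeff (P i) = 0)
    (hJac : ∀ i j, b i ≤ b j → pderiv j (P i) = if i = j then 1 else 0) :
    Function.Bijective (fun (z : Fin n → ℂ) (i : Fin n) => eval z (P i)) ∧
    ∃ Q : Fin n → MvPolynomial (Fin n) ℂ,
      (∀ i, constantCoeff (Q i) = 0) ∧
      Function.LeftInverse (fun (ζ : Fin n → ℂ) (i : Fin n) => eval ζ (Q i))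
        (fun (z : Fin n → ℂ) (i : Fin n) => eval z (P i)) ∧
      Function.RightInverse (fun (ζ : Fin n → ℂ) (i : Fin n) => eval ζ (Q i))
        (fun (z : Fin n → ℂ) (i : Fin n) => eval z (P i)) ∧
      (∀ i j, b i ≤ b j → pderiv j (Q i) = if i = j then 1 else 0) := by
  classical
  set S : Fin n → MvPolynomial (Fin n) ℂ := fun i => P i - X i with hSdef
  -- basic facts about S
  have hS0 : ∀ i, constantCoeff (S i) = 0 := by
    intro i; simp [hSdef, hP0 i]
  have hSp : ∀ i j, b i ≤ b j → pderiv j (S i) = 0 := by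
    intro i j hij
    have := hJac i j hij
    by_cases h : i = j
    · subst h; simp [hSdef, this]
    · simp only [hSdef, map_sub, this, if_neg h, pderiv_X_of_ne h, sub_zero]
  have hSvars : ∀ i j, j ∈ (S i).vars → (b j : ℕ) < (b i : ℕ) := by
    intro i j hj
    by_contra hc
    push_neg at hc
    exact not_mem_vars_of_pderiv_eq_zero (hSp i j (Fin.le_def.mpr hc)) hj
  have hPi : ∀ i, P i = X i + S i := by intro i; simp [hSdef]
  set Q : Fin n → MvPolynomial (Fin n) ℂ := jacQ n l b S with hQdef
  have hQeq : ∀ i, Q i =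
      X i - bind₁ (fun j => if (b j : ℕ) < (b i : ℕ) then Q j else 0) (S i) := by
    intro i
    rw [hQdef, jacQ]
    simp only [dite_eq_ite]
  -- combined induction : vars bound, constant coeff, left inverse
  have main : ∀ k : ℕ, ∀ i : Fin n, (b i : ℕ) < k →
      ((∀ j ∈ (Q i).vars, (b j : ℕ) ≤ (b i : ℕ)) ∧
       constantCoeff (Q i) = 0 ∧
       (∀ z : Fin n → ℂ, eval (fun j => eval z (P j)) (Q i) = z i)) := by
    intro k
    induction k with
    | zero => intro i hi; omega
    | succ k ih =>
      intro i hi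
      refine ⟨?_, ?_, ?_⟩
      · -- vars bound
        intro j hj
        rw [hQeq i] at hj
        have := vars_sub_subset (p := X i)
          (q := bind₁ (fun j => if (b j : ℕ) < (b i : ℕ) then Q j else 0) (S i)) hj
        rcases Finset.mem_union.mp this with h | h
        · rw [vars_X] at h
          simp only [Finset.mem_singleton] at h
          subst h; exact le_rfl
        · have := vars_bind₁ _ (S i) h
          obtain ⟨m, hm, hjm⟩ := Finset.mem_biUnion.mp this
          have hbm : (b m : ℕ) < (b i : ℕ) := hSvars i m hm
          rw [if_pos hbm] at hjm
          have hmk : (b m : ℕ) < k := by omega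
          have := (ih m hmk).1 j hjm
          omega
      · -- constant coefficient
        rw [hQeq i]
        rw [map_sub]
        have h1 : constantCoeff (X i : MvPolynomial (Fin n) ℂ) = 0 := by simp
        have h2 : constantCoeff
            (bind₁ (fun j => if (b j : ℕ) < (b i : ℕ) then Q j else 0) (S i)) = 0 := by
          rw [← eval_zero, my_eval_bind₁]
          have heq : (fun j => eval (0 : Fin n → ℂ)
              (if (b j : ℕ) < (b i : ℕ) then Q j else 0)) = fun _ => (0 : ℂ) := by
            funext j
            split
            · rename_i hlt
              rw [eval_zero]
              exact (ih j (by omega)).2.1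
            · simp
          rw [heq, eval_zero']
          exact hS0 i
        rw [h1, h2, sub_zero]
      · -- left inverse
        intro z
        rw [hQeq i, map_sub, my_eval_bind₁]
        have hXi : eval (fun j => eval z (P j)) (X i) = eval z (P i) := eval_X i
        have hSi : eval (fun j => eval (fun j' => eval z (P j'))
            (if (b j : ℕ) < (b i : ℕ) then Q j else 0)) (S i) = eval z (S i) := by
          apply my_eval_congr
          intro m hm
          have hbm := hSvars i m hm
          rw [if_pos hbm]
          exact (ih m (by omega)).2.2 z
        rw [hXi, hSi, hPi i, map_add, eval_X]
        ring
  have hQvars : ∀ i, ∀ j ∈ (Q i).vars, (b j : ℕ) ≤ (b i : ℕ) :=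
    fun i => (main ((b i : ℕ) + 1) i (lt_add_one _)).1
  have hQ0 : ∀ i, constantCoeff (Q i) = 0 :=
    fun i => (main ((b i : ℕ) + 1) i (lt_add_one _)).2.1
  have hLeft : Function.LeftInverse (fun (ζ : Fin n → ℂ) (i : Fin n) => eval ζ (Q i))
      (fun (z : Fin n → ℂ) (i : Fin n) => eval z (P i)) := by
    intro z
    funext i
    exact (main ((b i : ℕ) + 1) i (lt_add_one _)).2.2 z
  have hRight : Function.RightInverse (fun (ζ : Fin n → ℂ) (i : Fin n) => eval ζ (Q i))
      (fun (z : Fin n → ℂ) (i : Fin n) => eval z (P i)) := by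
    intro ζ
    funext i
    show eval (fun j => eval ζ (Q j)) (P i) = ζ i
    rw [hPi i, map_add, eval_X]
    have hQi : eval ζ (Q i) = ζ i -
        eval (fun j => eval ζ (Q j)) (S i) := by
      rw [hQeq i, map_sub, eval_X, my_eval_bind₁]
      congr 1
      apply my_eval_congr
      intro m hm
      rw [if_pos (hSvars i m hm)]
    rw [hQi]
    ring
  have hQjac : ∀ i j, b i ≤ b j → pderiv j (Q i) = if i = j then 1 else 0 := by
    intro i j hij
    rw [hQeq i, map_sub]
    have h2 : pderiv j
        (bind₁ (fun m => if (b m : ℕ) < (b i : ℕ) then Q m else 0) (S i)) = 0 := by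
      apply pderiv_eq_zero_of_notMem_vars
      intro hj
      have := vars_bind₁ _ (S i) hj
      obtain ⟨m, hm, hjm⟩ := Finset.mem_biUnion.mp this
      have hbm : (b m : ℕ) < (b i : ℕ) := hSvars i m hm
      rw [if_pos hbm] at hjm
      have := hQvars m j hjm
      have := Fin.le_def.mp hij
      omega
    rw [h2, sub_zero]
    by_cases h : i = j
    · subst h; simp [pderiv_X_self]
    · rw [if_neg h, pderiv_X_of_ne h]
  refine ⟨⟨hLeft.injective, hRight.surjective⟩, Q, hQ0, hLeft, hRight, hQjac⟩
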